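/- Let u, v, w be unit vectors in a complex Hilbert space H such that the set {u, v, w} is linearly independent. Then the triangle inequality for δ is strict: δ(u,w) < δ(u,v) + δ(v,w), where δ(a,b) = √(1 − |⟨a,b⟩|²). (Consequently, for a reproducing kernel Hilbert space whose kernel functions at three distinct points are linearly independent, δ is never an inner distance between those points.) -/

import Mathlib

lemma delta_key_real {a b c A B : ℝ} (ha : 0 ≤ a) (ha1 : a ≤ 1) (hb : 0 ≤ b) (hb1 : b ≤ 1)
    (hc : 0 ≤ c) (hA2 : A ^ 2 = 1 - a ^ 2) (hB2 : B ^ 2 = 1 - b ^ 2)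
    (hlt : |c - a * b| < A * B) : 1 - c ^ 2 < (A + B) ^ 2 := by
  have hABpos : 0 < A * B := lt_of_le_of_lt (abs_nonneg _) hlt
  obtain ⟨h1, h2⟩ := abs_lt.mp hlt
  rcases le_or_gt (a ^ 2 + b ^ 2) 1 with h | h
  · nlinarith [sq_nonneg c]
  · have hab : A * B < a * b := by nlinarith [mul_nonneg ha hb]
    have h0 : 0 ≤ a * b - A * B := by linarith
    have hc2 : (a * b - A * B) ^ 2 < c ^ 2 := by nlinarith
    nlinarith [mul_nonneg hABpos.le (by nlinarith [mul_nonneg ha hb] : (0:ℝ) ≤ 1 - a * b),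
      sq_nonneg (A * B)]

/-- For unit vectors `u, v, w` in a complex Hilbert space
with `{u, v, w}` linearly independent, the triangle inequality for
`δ(a,b) = √(1 − |⟨a,b⟩|²)` is strict: `δ(u,w) < δ(u,v) + δ(v,w)`.
(Consequently, for a RKHS whose kernel functions at three distinct points are
linearly independent, `δ` is never an inner distance between those points.) -/
theorem delta_strict_triangle {H : Type*} [NormedAddCommGroup H] [InnerProductSpace ℂ H]
    (u v w : H) (hu : ‖u‖ = 1) (hv : ‖v‖ = 1) (hw : ‖w‖ = 1)
    (hind : LinearIndependent ℂ ![u, v, w]) :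
    Real.sqrt (1 - ‖(inner ℂ u w : ℂ)‖ ^ 2)
      < Real.sqrt (1 - ‖(inner ℂ u v : ℂ)‖ ^ 2) + Real.sqrt (1 - ‖(inner ℂ v w : ℂ)‖ ^ 2) := by
  have hdep : ∀ g : Fin 3 → ℂ, g 0 • u + g 1 • v + g 2 • w = 0 → ∀ i, g i = 0 := by
    intro g hg i
    refine Fintype.linearIndependent_iff.mp hind g ?_ i
    simpa [Fin.sum_univ_three] using hg
  set p : H := u - (inner ℂ v u : ℂ) • v with hp
  set q : H := w - (inner ℂ v w : ℂ) • v with hq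
  have hvv : (inner ℂ v v : ℂ) = 1 := by
    simp [inner_self_eq_norm_sq_to_K, hv]
  have huu : (inner ℂ u u : ℂ) = 1 := by
    simp [inner_self_eq_norm_sq_to_K, hu]
  have hww : (inner ℂ w w : ℂ) = 1 := by
    simp [inner_self_eq_norm_sq_to_K, hw]
  have hmc : ∀ z : ℂ, z * (starRingEnd ℂ) z = (‖z‖ : ℂ) ^ 2 := fun z => by
    rw [RCLike.mul_conj]; norm_cast
  have hwv : (inner ℂ w v : ℂ) = (starRingEnd ℂ) (inner ℂ v w : ℂ) := (inner_conj_symm w v).symm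
  have hpp : (inner ℂ p p : ℂ) = ((1 : ℝ) - ‖(inner ℂ u v : ℂ)‖ ^ 2 : ℝ) := by
    simp only [hp, inner_sub_left, inner_sub_right, inner_smul_left, inner_smul_right, hvv, huu,
      inner_conj_symm, mul_one]
    rw [← inner_conj_symm v u, hmc]
    push_cast
    ring_nf
  have hqq : (inner ℂ q q : ℂ) = ((1 : ℝ) - ‖(inner ℂ v w : ℂ)‖ ^ 2 : ℝ) := by
    simp only [hq, inner_sub_left, inner_sub_right, inner_smul_left, inner_smul_right, hvv, hww,
      inner_conj_symm, mul_one]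
    rw [hwv, mul_comm ((starRingEnd ℂ) (inner ℂ v w : ℂ)), hmc]
    push_cast
    ring
  have hpq : (inner ℂ p q : ℂ) = (inner ℂ u w : ℂ) - (inner ℂ u v : ℂ) * (inner ℂ v w : ℂ) := by
    simp only [hp, hq, inner_sub_left, inner_sub_right, inner_smul_left, inner_smul_right, hvv,
      inner_conj_symm, mul_one]
    ring
  have hnp : ‖p‖ ^ 2 = 1 - ‖(inner ℂ u v : ℂ)‖ ^ 2 := by
    have h2 := inner_self_eq_norm_sq_to_K (𝕜 := ℂ) p
    rw [hpp] at h2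
    exact RCLike.ofReal_injective (K := ℂ) (by push_cast at h2 ⊢; exact h2.symm)
  have hnq : ‖q‖ ^ 2 = 1 - ‖(inner ℂ v w : ℂ)‖ ^ 2 := by
    have h2 := inner_self_eq_norm_sq_to_K (𝕜 := ℂ) q
    rw [hqq] at h2
    exact RCLike.ofReal_injective (K := ℂ) (by push_cast at h2 ⊢; exact h2.symm)
  -- `p ≠ 0` and `q` is not a multiple of `p`, by linear independence
  have hp0 : p ≠ 0 := by
    intro h
    have h' : u - (inner ℂ v u : ℂ) • v = 0 := by rw [← hp]; exact h
    have hz : (1 : ℂ) • u + (-(inner ℂ v u : ℂ)) • v + (0 : ℂ) • w = 0 := by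
      rw [one_smul, neg_smul, zero_smul, add_zero, ← sub_eq_add_neg]
      exact h'
    have := hdep ![1, -(inner ℂ v u : ℂ), 0] (by simpa using hz) 0
    simp at this
  have hnr : ¬∃ r : ℂ, q = r • p := by
    rintro ⟨r, hr⟩
    rw [hp, hq] at hr
    have hz : (-r) • u + (r * (inner ℂ v u : ℂ) - (inner ℂ v w : ℂ)) • v + (1 : ℂ) • w = 0 := by
      generalize (inner ℂ v u : ℂ) = α at hr ⊢
      generalize (inner ℂ v w : ℂ) = β at hr ⊢
      rw [smul_sub, smul_smul] at hr
      have hw' : w = r • u - (r * α) • v + β • v := by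
        rw [← sub_eq_iff_eq_add.mp hr]
      rw [hw']
      module
    have := hdep ![-r, r * (inner ℂ v u : ℂ) - (inner ℂ v w : ℂ), 1] (by simpa using hz) 2
    simp at this
  -- strict Cauchy–Schwarz for p, q
  have hCS : ‖(inner ℂ p q : ℂ)‖ < ‖p‖ * ‖q‖ := by
    refine lt_of_le_of_ne (norm_inner_le_norm p q) fun he => ?_
    rcases ((norm_inner_eq_norm_tfae (𝕜 := ℂ) p q).out 0 2).mp he with h | h
    · exact hp0 h
    · exact hnr h
  -- transfer to the scalar inequality
  set a := ‖(inner ℂ u v : ℂ)‖ with hadef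
  set b := ‖(inner ℂ v w : ℂ)‖ with hbdef
  set c := ‖(inner ℂ u w : ℂ)‖ with hcdef
  have ha1 : a ≤ 1 := by
    simpa [hu, hv] using norm_inner_le_norm (𝕜 := ℂ) u v
  have hb1 : b ≤ 1 := by
    simpa [hv, hw] using norm_inner_le_norm (𝕜 := ℂ) v w
  have habs : |c - a * b| < ‖p‖ * ‖q‖ := by
    calc |c - a * b| = |‖(inner ℂ u w : ℂ)‖ - ‖(inner ℂ u v : ℂ) * (inner ℂ v w : ℂ)‖| := by
          rw [norm_mul]
      _ ≤ ‖(inner ℂ u w : ℂ) - (inner ℂ u v : ℂ) * (inner ℂ v w : ℂ)‖ := abs_norm_sub_norm_le _ _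
      _ = ‖(inner ℂ p q : ℂ)‖ := by rw [hpq]
      _ < ‖p‖ * ‖q‖ := hCS
  have hApos : 0 < Real.sqrt (1 - a ^ 2) + Real.sqrt (1 - b ^ 2) := by
    have : (0:ℝ) < ‖p‖ := norm_pos_iff.mpr hp0
    have hA : Real.sqrt (1 - a ^ 2) = ‖p‖ := by
      rw [← hnp, Real.sqrt_sq (norm_nonneg p)]
    rw [hA]
    positivity
  rw [Real.sqrt_lt' hApos]
  have hA : Real.sqrt (1 - a ^ 2) = ‖p‖ := by rw [← hnp, Real.sqrt_sq (norm_nonneg p)]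
  have hB : Real.sqrt (1 - b ^ 2) = ‖q‖ := by rw [← hnq, Real.sqrt_sq (norm_nonneg q)]
  rw [hA, hB]
  exact delta_key_real (norm_nonneg _) ha1 (norm_nonneg _) hb1 (norm_nonneg _)
    hnp hnq habs
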